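/- For every integer n ≥ 4, (2n − 5) · ∑_T O(T) = n·(n − 4) · C_{n−2}, the sum ranging over all triangulations T of P_n; equivalently, the expected value of O under a uniformly random triangulation of P_n is n(n−4)/(2n−5). -/

import Mathlib

open Finset
open scoped Classical

/-- `IsDiag l r i j` : the pair `{i, j}` (written with `i < j`) is a diagonal of the
convex sub-polygon on vertices `{l, …, r}`. -/
def IsDiag (l r i j : ℕ) : Prop :=
  l ≤ i ∧ i + 2 ≤ j ∧ j ≤ r ∧ ¬(i = l ∧ j = r)

/-- Two diagonals `{a, b}` and `{c, d}` (written with `a < b`, `c < d`) cross. -/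
def Crosses (a b c d : ℕ) : Prop :=
  (a < c ∧ c < b ∧ b < d) ∨ (c < a ∧ a < d ∧ d < b)

/-- All diagonals of the sub-polygon on `{l, …, r}`, as ordered pairs. -/
noncomputable def allDiags (l r : ℕ) : Finset (ℕ × ℕ) :=
  (range (r + 1) ×ˢ range (r + 1)).filter fun p => IsDiag l r p.1 p.2

/-- The triangulations of the sub-polygon on `{l, …, r}` : sets of `r - l - 2`
pairwise noncrossing diagonals. -/
noncomputable def triangulations (l r : ℕ) : Finset (Finset (ℕ × ℕ)) :=
  (allDiags l r).powerset.filter fun T =>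
    T.card = r - l - 2 ∧ ∀ d ∈ T, ∀ e ∈ T, ¬ Crosses d.1 d.2 e.1 e.2

/-- `IsEdge l r i j` : the pair `{i, j}` (with `i < j`) is an edge (boundary side) of the
sub-polygon on `{l, …, r}`. -/
def IsEdge (l r i j : ℕ) : Prop :=
  (l ≤ i ∧ j = i + 1 ∧ j ≤ r) ∨ (i = l ∧ j = r)

/-- `{i, j}` is a side available in the triangulation `T` (an edge of the polygon or a
diagonal of `T`). -/
def IsSide (l r : ℕ) (T : Finset (ℕ × ℕ)) (i j : ℕ) : Prop :=
  IsEdge l r i j ∨ (i, j) ∈ T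

/-- The triangles of a triangulation `T` of the sub-polygon on `{l, …, r}`, as ordered
triples `(a, b, c)` with `a < b < c`, each of whose three sides is an edge or a diagonal
of `T`. -/
noncomputable def triangles (l r : ℕ) (T : Finset (ℕ × ℕ)) : Finset (ℕ × ℕ × ℕ) :=
  (range (r + 1) ×ˢ range (r + 1) ×ˢ range (r + 1)).filter fun t =>
    t.1 < t.2.1 ∧ t.2.1 < t.2.2 ∧
      IsSide l r T t.1 t.2.1 ∧ IsSide l r T t.2.1 t.2.2 ∧ IsSide l r T t.1 t.2.2

/-- The number of sides of the triangle `{a, b, c}` (with `a < b < c`) that are edges of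
the sub-polygon on `{l, …, r}`. -/
noncomputable def edgeCount (l r a b c : ℕ) : ℕ :=
  (if IsEdge l r a b then 1 else 0) + (if IsEdge l r b c then 1 else 0) +
    (if IsEdge l r a c then 1 else 0)

/-- `O(T)` : the number of triangles of `T` with exactly one side an edge of `P_n`. -/
noncomputable def oneSideCount (n : ℕ) (T : Finset (ℕ × ℕ)) : ℕ :=
  ((triangles 1 n T).filter fun t => edgeCount 1 n t.1 t.2.1 t.2.2 = 1).card

/-- `Ear(T)` : the number of triangles of `T` with at least two sides edges of `P_n`. -/
noncomputable def earCount (n : ℕ) (T : Finset (ℕ × ℕ)) : ℕ :=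
  ((triangles 1 n T).filter fun t => 2 ≤ edgeCount 1 n t.1 t.2.1 t.2.2).card

/-- `D(T)` : the number of triangles of `T` containing vertex `1`. -/
noncomputable def degOne (n : ℕ) (T : Finset (ℕ × ℕ)) : ℕ :=
  ((triangles 1 n T).filter fun t => t.1 = 1 ∨ t.2.1 = 1 ∨ t.2.2 = 1).card

/-- `B(T)` : the number of triangles `{l, j, r}` of `T` (with `l < j < r`) such that
`j - l = 1`. -/
noncomputable def blueCount (n : ℕ) (T : Finset (ℕ × ℕ)) : ℕ :=
  ((triangles 1 n T).filter fun t => t.2.1 - t.1 = 1).card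

/-- `A_i(T)` : the number of triangles `{1, a, b}` of `T` containing vertex `1`
(written with `1 < a < b`) such that `b - a = i`. -/
noncomputable def angleCount (n : ℕ) (T : Finset (ℕ × ℕ)) (i : ℕ) : ℕ :=
  ((triangles 1 n T).filter fun t => t.1 = 1 ∧ t.2.2 - t.2.1 = i).card

/-! ### Auxiliary development -/

/-- Pairwise noncrossing predicate. -/
def NC (D : Finset (ℕ × ℕ)) : Prop :=
  ∀ d ∈ D, ∀ e ∈ D, ¬ Crosses d.1 d.2 e.1 e.2

lemma mem_allDiags {l r : ℕ} {p : ℕ × ℕ} :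
    p ∈ allDiags l r ↔ IsDiag l r p.1 p.2 := by
  unfold allDiags
  simp only [mem_filter, mem_product, mem_range]
  refine ⟨fun h => h.2, fun h => ⟨⟨?_, ?_⟩, h⟩⟩ <;>
    · obtain ⟨h1, h2, h3, h4⟩ := h; omega

lemma mem_triangulations {l r : ℕ} {T : Finset (ℕ × ℕ)} :
    T ∈ triangulations l r ↔ T ⊆ allDiags l r ∧ T.card = r - l - 2 ∧ NC T := by
  unfold triangulations NC
  simp only [mem_filter, mem_powerset]
  try tauto

lemma diag_of_mem {l r : ℕ} {T : Finset (ℕ × ℕ)} (hT : T ⊆ allDiags l r)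
    {p : ℕ × ℕ} (hp : p ∈ T) : l ≤ p.1 ∧ p.1 + 2 ≤ p.2 ∧ p.2 ≤ r ∧ ¬(p.1 = l ∧ p.2 = r) :=
  mem_allDiags.1 (hT hp)

lemma isSide_bounds {l r i j : ℕ} {T : Finset (ℕ × ℕ)} (hlr : l < r) (hT : T ⊆ allDiags l r)
    (h : IsSide l r T i j) : l ≤ i ∧ i < j ∧ j ≤ r := by
  rcases h with (⟨h1, h2, h3⟩ | ⟨h1, h2⟩) | h
  · omega
  · omega
  · have := diag_of_mem hT h; omega

lemma mem_triangles {l r : ℕ} {T : Finset (ℕ × ℕ)} {t : ℕ × ℕ × ℕ} (hlr : l < r)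
    (hT : T ⊆ allDiags l r) :
    t ∈ triangles l r T ↔
      t.1 < t.2.1 ∧ t.2.1 < t.2.2 ∧ IsSide l r T t.1 t.2.1 ∧
        IsSide l r T t.2.1 t.2.2 ∧ IsSide l r T t.1 t.2.2 := by
  unfold triangles
  simp only [mem_filter, mem_product, mem_range]
  constructor
  · tauto
  · rintro ⟨h1, h2, h3, h4, h5⟩
    have b5 := isSide_bounds hlr hT h5
    exact ⟨⟨by omega, by omega, by omega⟩, h1, h2, h3, h4, h5⟩

lemma triangle_bounds {l r : ℕ} {T : Finset (ℕ × ℕ)} {t : ℕ × ℕ × ℕ} (hlr : l < r)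
    (hT : T ⊆ allDiags l r) (ht : t ∈ triangles l r T) :
    l ≤ t.1 ∧ t.1 < t.2.1 ∧ t.2.1 < t.2.2 ∧ t.2.2 ≤ r := by
  rw [mem_triangles hlr hT] at ht
  have := isSide_bounds hlr hT ht.2.2.2.2
  omega
/-- Collapse map used to shrink a polygon. -/
def cmap (a k : ℕ) (p : ℕ × ℕ) : ℕ × ℕ :=
  (if p.1 ≤ a then p.1 else p.1 - k, if p.2 ≤ a then p.2 else p.2 - k)

/-- Any noncrossing set of diagonals of the polygon on `{l, …, r}` has at most
`r - l - 2` elements. -/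
lemma noncross_card_le (s : ℕ) : ∀ (l r : ℕ) (D : Finset (ℕ × ℕ)), r ≤ l + s →
    D ⊆ allDiags l r → NC D → D.card ≤ r - l - 2 := by
  induction s with
  | zero =>
    intro l r D h hD hNC
    have hempty : D = ∅ :=
      eq_empty_of_forall_notMem (fun p hp => by have := diag_of_mem hD hp; omega)
    simp [hempty]
  | succ s ih =>
    intro l r D h hD hNC
    rcases D.eq_empty_or_nonempty with rfl | hne
    · simp
    obtain ⟨ab, hab, hmin⟩ := D.exists_min_image (fun p => p.2 - p.1) hne
    obtain ⟨a, b⟩ := ab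
    obtain ⟨hla, hab2, hbr, hne'⟩ := diag_of_mem hD hab
    have havoid : ∀ p ∈ D, p ≠ (a, b) →
        (p.1 ≤ a ∨ b ≤ p.1) ∧ (p.2 ≤ a ∨ b ≤ p.2) := by
      intro p hp hpne
      obtain ⟨h1, h2, h3, h4⟩ := diag_of_mem hD hp
      have hm := hmin p hp
      have nc1 := hNC (a, b) hab p hp
      have nc2 := hNC p hp (a, b) hab
      unfold Crosses at nc1 nc2
      simp only at nc1 nc2 hm
      have hne2 : ¬(p.1 = a ∧ p.2 = b) := by
        intro hc; exact hpne (Prod.ext_iff.mpr hc)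
      omega
    set k := b - a - 1 with hk
    have hknn : 1 ≤ k := by omega
    have hinj : Set.InjOn (cmap a k) (D.erase (a, b)) := by
      intro p1 h1 p2 h2 heq
      simp only [Finset.coe_erase, Set.mem_diff, Set.mem_singleton_iff, mem_coe,
        Finset.mem_erase] at h1 h2
      obtain ⟨hmem1, hne1⟩ := h1
      obtain ⟨hmem2, hne2⟩ := h2
      have av1 := havoid p1 hmem1 hne1
      have av2 := havoid p2 hmem2 hne2
      obtain ⟨d1a, d1b, d1c, -⟩ := diag_of_mem hD hmem1
      obtain ⟨d2a, d2b, d2c, -⟩ := diag_of_mem hD hmem2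
      simp only [cmap, Prod.mk.injEq] at heq
      refine Prod.ext_iff.mpr ⟨?_, ?_⟩ <;> (rcases heq with ⟨e1, e2⟩; split_ifs at e1 e2 <;> omega)
    have hsub : (D.erase (a, b)).image (cmap a k) ⊆ allDiags l (r - k) := by
      intro q hq
      obtain ⟨p, hp, rfl⟩ := Finset.mem_image.1 hq
      have hpne := Finset.ne_of_mem_erase hp
      have hpD := Finset.mem_of_mem_erase hp
      have av := havoid p hpD hpne
      obtain ⟨d1, d2, d3, d4⟩ := diag_of_mem hD hpD
      rw [mem_allDiags]
      have hne2 : ¬(p.1 = a ∧ p.2 = b) := by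
        intro hc; exact hpne (Prod.ext_iff.mpr hc)
      unfold IsDiag cmap
      simp only
      refine ⟨?_, ?_, ?_, ?_⟩
      · split_ifs <;> omega
      · split_ifs <;> omega
      · split_ifs <;> omega
      · split_ifs <;> omega
    have hNC' : NC ((D.erase (a, b)).image (cmap a k)) := by
      intro q1 hq1 q2 hq2
      obtain ⟨p1, hp1, rfl⟩ := Finset.mem_image.1 hq1
      obtain ⟨p2, hp2, rfl⟩ := Finset.mem_image.1 hq2
      have av1 := havoid p1 (Finset.mem_of_mem_erase hp1) (Finset.ne_of_mem_erase hp1)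
      have av2 := havoid p2 (Finset.mem_of_mem_erase hp2) (Finset.ne_of_mem_erase hp2)
      obtain ⟨d1a, d1b, d1c, -⟩ := diag_of_mem hD (Finset.mem_of_mem_erase hp1)
      obtain ⟨d2a, d2b, d2c, -⟩ := diag_of_mem hD (Finset.mem_of_mem_erase hp2)
      have nc := hNC p1 (Finset.mem_of_mem_erase hp1) p2 (Finset.mem_of_mem_erase hp2)
      unfold Crosses at nc ⊢
      unfold cmap
      simp only
      split_ifs <;> omega
    have hcard : ((D.erase (a, b)).image (cmap a k)).card = D.card - 1 := by
      rw [Finset.card_image_of_injOn hinj, Finset.card_erase_of_mem hab]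
    have hrec := ih l (r - k) _ (by omega) hsub hNC'
    have hpos : 1 ≤ D.card := Finset.card_pos.2 ⟨_, hab⟩
    omega
/-- `e` is one of the three sides of the ordered triangle `t`. -/
def SideOf (e : ℕ × ℕ) (t : ℕ × ℕ × ℕ) : Prop :=
  e = (t.1, t.2.1) ∨ e = (t.2.1, t.2.2) ∨ e = (t.1, t.2.2)

lemma side_mem {l r i j : ℕ} {T : Finset (ℕ × ℕ)} (h : IsSide l r T i j)
    (hne : ¬ IsEdge l r i j) : (i, j) ∈ T := h.resolve_left hne

private lemma aux_up_up {l r i c c' : ℕ} {T : Finset (ℕ × ℕ)} (hNC : NC T)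
    (hcc : c < c') (h1 : IsSide l r T i c) (h2 : IsSide l r T (i+1) c')
    (hli : l ≤ i) (hic : i + 2 ≤ c) (hcr : c' ≤ r) : False := by
  have m1 : (i, c) ∈ T := side_mem h1 (by unfold IsEdge; omega)
  have m2 : (i+1, c') ∈ T := side_mem h2 (by unfold IsEdge; omega)
  exact hNC _ m1 _ m2 (Or.inl ⟨by omega, by omega, by omega⟩)

private lemma aux_down_down {l r i a a' : ℕ} {T : Finset (ℕ × ℕ)} (hNC : NC T)
    (haa : a < a') (h1 : IsSide l r T a i) (h2 : IsSide l r T a' (i+1))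
    (hla : l ≤ a) (ha'i : a' < i) (hir : i + 1 ≤ r) : False := by
  have m1 : (a, i) ∈ T := side_mem h1 (by unfold IsEdge; omega)
  have m2 : (a', i+1) ∈ T := side_mem h2 (by unfold IsEdge; omega)
  exact hNC _ m1 _ m2 (Or.inl ⟨by omega, by omega, by omega⟩)

private lemma aux_mixed {l r i a c : ℕ} {T : Finset (ℕ × ℕ)} (hNC : NC T)
    (h1 : IsSide l r T a (i+1)) (h2 : IsSide l r T i c)
    (hla : l ≤ a) (hai : a < i) (hic : i + 2 ≤ c) (hcr : c ≤ r) : False := by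
  have m1 : (a, i+1) ∈ T := side_mem h1 (by unfold IsEdge; omega)
  have m2 : (i, c) ∈ T := side_mem h2 (by unfold IsEdge; omega)
  exact hNC _ m1 _ m2 (Or.inl ⟨by omega, by omega, by omega⟩)

/-- A consecutive edge `(i, i+1)` lies in at most one triangle of a noncrossing family. -/
lemma triangle_unique_consec {l r i : ℕ} {T : Finset (ℕ × ℕ)} (hlr : l < r)
    (hT : T ⊆ allDiags l r) (hNC : NC T) {t t' : ℕ × ℕ × ℕ}
    (ht : t ∈ triangles l r T) (ht' : t' ∈ triangles l r T)
    (hs : SideOf (i, i+1) t) (hs' : SideOf (i, i+1) t') : t = t' := by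
  obtain ⟨a, b, c⟩ := t
  obtain ⟨a', b', c'⟩ := t'
  rw [mem_triangles hlr hT] at ht ht'
  obtain ⟨hab, hbc, s1, s2, s3⟩ := ht
  obtain ⟨hab', hbc', s1', s2', s3'⟩ := ht'
  simp only at hab hbc s1 s2 s3 hab' hbc' s1' s2' s3'
  obtain ⟨bl, bm, br⟩ := isSide_bounds hlr hT s3
  obtain ⟨bl', bm', br'⟩ := isSide_bounds hlr hT s3'
  unfold SideOf at hs hs'
  simp only [Prod.mk.injEq] at hs hs'
  rcases hs with ⟨hi, hj⟩ | ⟨hi, hj⟩ | ⟨hi, hj⟩ <;>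
    rcases hs' with ⟨hi', hj'⟩ | ⟨hi', hj'⟩ | ⟨hi', hj'⟩ <;>
    (try (exfalso; omega)) <;>
    subst hi <;> subst hj <;> (try subst hi') <;> (try subst hj')
  -- up / up
  · rcases lt_trichotomy c c' with hcc | rfl | hcc
    · exact (aux_up_up hNC hcc s3 s2' bl (by omega) br').elim
    · rfl
    · exact (aux_up_up hNC hcc s3' s2 bl (by omega) br).elim
  -- up / down
  · exact (aux_mixed hNC s3' s3 bl' (by omega) (by omega) br).elim
  -- down / up
  · exact (aux_mixed hNC s3 s3' bl (by omega) (by omega) br').elim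
  -- down / down
  · rcases lt_trichotomy a a' with haa | rfl | haa
    · exact (aux_down_down hNC haa s1 s3' bl (by omega) (by omega)).elim
    · rfl
    · exact (aux_down_down hNC haa s1' s3 bl' (by omega) (by omega)).elim

/-- The long edge `(l, r)` lies in at most one triangle of a noncrossing family. -/
lemma triangle_unique_lr {l r : ℕ} {T : Finset (ℕ × ℕ)} (hlr : l < r)
    (hT : T ⊆ allDiags l r) (hNC : NC T) {t t' : ℕ × ℕ × ℕ}
    (ht : t ∈ triangles l r T) (ht' : t' ∈ triangles l r T)
    (hs : SideOf (l, r) t) (hs' : SideOf (l, r) t') : t = t' := by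
  obtain ⟨a, b, c⟩ := t
  obtain ⟨a', b', c'⟩ := t'
  rw [mem_triangles hlr hT] at ht ht'
  obtain ⟨hab, hbc, s1, s2, s3⟩ := ht
  obtain ⟨hab', hbc', s1', s2', s3'⟩ := ht'
  simp only at hab hbc s1 s2 s3 hab' hbc' s1' s2' s3'
  obtain ⟨bl, bm, br⟩ := isSide_bounds hlr hT s3
  obtain ⟨bl', bm', br'⟩ := isSide_bounds hlr hT s3'
  obtain ⟨cl, cm, cr⟩ := isSide_bounds hlr hT s1
  obtain ⟨cl', cm', cr'⟩ := isSide_bounds hlr hT s1'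
  obtain ⟨dl, dm, dr⟩ := isSide_bounds hlr hT s2
  obtain ⟨dl', dm', dr'⟩ := isSide_bounds hlr hT s2'
  unfold SideOf at hs hs'
  simp only [Prod.mk.injEq] at hs hs'
  rcases hs with ⟨hi, hj⟩ | ⟨hi, hj⟩ | ⟨hi, hj⟩ <;>
    rcases hs' with ⟨hi', hj'⟩ | ⟨hi', hj'⟩ | ⟨hi', hj'⟩ <;>
    (try (exfalso; omega)) <;>
    subst hi <;> subst hj <;> (try subst hi') <;> (try subst hj')
  · rcases lt_trichotomy b b' with hbb | rfl | hbb
    · have m1 : (l, b') ∈ T := side_mem s1' (by unfold IsEdge; omega)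
      have m2 : (b, r) ∈ T := side_mem s2 (by unfold IsEdge; omega)
      exact (hNC _ m1 _ m2 (Or.inl ⟨by omega, by omega, by omega⟩)).elim
    · rfl
    · have m1 : (l, b) ∈ T := side_mem s1 (by unfold IsEdge; omega)
      have m2 : (b', r) ∈ T := side_mem s2' (by unfold IsEdge; omega)
      exact (hNC _ m1 _ m2 (Or.inl ⟨by omega, by omega, by omega⟩)).elim
/-- The (at most two) diagonals `(l,j)`, `(j,r)` as a finset. -/
noncomputable def dset (l r j : ℕ) : Finset (ℕ × ℕ) :=
  (allDiags l r).filter (fun p => p = (l, j) ∨ p = (j, r))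

/-- Glue two triangulations of the polygons on `{l,…,j}` and `{j,…,r}` along the
triangle `(l,j,r)`. -/
noncomputable def glue (l r j : ℕ) (T1 T2 : Finset (ℕ × ℕ)) : Finset (ℕ × ℕ) :=
  T1 ∪ T2 ∪ dset l r j

lemma mem_dset {l r j : ℕ} {p : ℕ × ℕ} (hlj : l < j) (hjr : j < r) :
    p ∈ dset l r j ↔ (p = (l, j) ∧ l + 2 ≤ j) ∨ (p = (j, r) ∧ j + 2 ≤ r) := by
  unfold dset
  rw [mem_filter, mem_allDiags]
  constructor
  · rintro ⟨hd, rfl | rfl⟩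
    · exact Or.inl ⟨rfl, by unfold IsDiag at hd; simp only at hd; omega⟩
    · exact Or.inr ⟨rfl, by unfold IsDiag at hd; simp only at hd; omega⟩
  · rintro (⟨rfl, h⟩ | ⟨rfl, h⟩)
    · exact ⟨⟨le_refl l, by omega, by omega, by omega⟩, Or.inl rfl⟩
    · exact ⟨⟨by omega, by omega, le_refl r, by omega⟩, Or.inr rfl⟩

lemma card_dset {l r j : ℕ} (hlj : l < j) (hjr : j < r) :
    (dset l r j).card = (if l + 2 ≤ j then 1 else 0) + (if j + 2 ≤ r then 1 else 0) := by
  by_cases h1 : l + 2 ≤ j <;> by_cases h2 : j + 2 ≤ r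
  · have : dset l r j = {(l, j), (j, r)} := by
      ext p
      rw [mem_dset hlj hjr]
      simp only [mem_insert, mem_singleton, h1, h2, and_true]
    rw [this, if_pos h1, if_pos h2,
      card_insert_of_notMem (by simp [Prod.ext_iff]; omega), card_singleton]
  · have : dset l r j = {(l, j)} := by
      ext p
      rw [mem_dset hlj hjr]
      simp only [mem_singleton, h1, h2, and_true, and_false, or_false]
    rw [this, if_pos h1, if_neg h2, card_singleton]
  · have : dset l r j = {(j, r)} := by
      ext p
      rw [mem_dset hlj hjr]
      simp only [mem_singleton, h1, h2, and_true, and_false, false_or]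
    rw [this, if_neg h1, if_pos h2, card_singleton]
  · have : dset l r j = ∅ := by
      ext p
      rw [mem_dset hlj hjr]
      simp only [h1, h2, and_false, or_self, notMem_empty]
    rw [this, if_neg h1, if_neg h2, card_empty]

lemma glue_mem_triangulations {l r j : ℕ} {T1 T2 : Finset (ℕ × ℕ)}
    (hlj : l < j) (hjr : j < r)
    (hT1 : T1 ∈ triangulations l j) (hT2 : T2 ∈ triangulations j r) :
    glue l r j T1 T2 ∈ triangulations l r := by
  obtain ⟨hs1, hc1, hn1⟩ := mem_triangulations.1 hT1
  obtain ⟨hs2, hc2, hn2⟩ := mem_triangulations.1 hT2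
  have b1 : ∀ p ∈ T1, l ≤ p.1 ∧ p.1 + 2 ≤ p.2 ∧ p.2 ≤ j ∧ ¬(p.1 = l ∧ p.2 = j) :=
    fun p hp => diag_of_mem hs1 hp
  have b2 : ∀ p ∈ T2, j ≤ p.1 ∧ p.1 + 2 ≤ p.2 ∧ p.2 ≤ r ∧ ¬(p.1 = j ∧ p.2 = r) :=
    fun p hp => diag_of_mem hs2 hp
  rw [mem_triangulations]
  refine ⟨?_, ?_, ?_⟩
  · -- subset
    intro p hp
    rcases mem_union.1 hp with hp' | hp'
    · rcases mem_union.1 hp' with h | h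
      · have := b1 p h; rw [mem_allDiags]; exact ⟨by omega, by omega, by omega, by omega⟩
      · have := b2 p h; rw [mem_allDiags]; exact ⟨by omega, by omega, by omega, by omega⟩
    · exact mem_filter.1 hp' |>.1
  · -- cardinality
    have disj12 : Disjoint T1 T2 := by
      rw [Finset.disjoint_left]
      intro p h1 h2
      have := b1 p h1; have := b2 p h2; omega
    have disj3 : Disjoint (T1 ∪ T2) (dset l r j) := by
      rw [Finset.disjoint_left]
      intro p h1 h2
      rcases (mem_dset hlj hjr).1 h2 with ⟨rfl, h⟩ | ⟨rfl, h⟩ <;>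
        rcases mem_union.1 h1 with h' | h'
      · have := b1 _ h'; dsimp only at this; omega
      · have := b2 _ h'; dsimp only at this; omega
      · have := b1 _ h'; dsimp only at this; omega
      · have := b2 _ h'; dsimp only at this; omega
    unfold glue
    rw [card_union_of_disjoint disj3, card_union_of_disjoint disj12, hc1, hc2,
      card_dset hlj hjr]
    split_ifs <;> omega
  · -- noncrossing
    intro p hp q hq
    have hmem : ∀ x : ℕ × ℕ, x ∈ glue l r j T1 T2 → x ∈ T1 ∨ x ∈ T2 ∨ x ∈ dset l r j := by
      intro x hx
      rcases mem_union.1 hx with h | h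
      · rcases mem_union.1 h with h' | h'
        · exact Or.inl h'
        · exact Or.inr (Or.inl h')
      · exact Or.inr (Or.inr h)
    rcases hmem p hp with h1 | h1 | h1 <;> rcases hmem q hq with h2 | h2 | h2
    · exact hn1 p h1 q h2
    · have := b1 p h1; have := b2 q h2; unfold Crosses; omega
    · have := b1 p h1
      rcases (mem_dset hlj hjr).1 h2 with ⟨rfl, h⟩ | ⟨rfl, h⟩ <;> (unfold Crosses; simp only; omega)
    · have := b1 q h2; have := b2 p h1; unfold Crosses; omega
    · exact hn2 p h1 q h2
    · have := b2 p h1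
      rcases (mem_dset hlj hjr).1 h2 with ⟨rfl, h⟩ | ⟨rfl, h⟩ <;> (unfold Crosses; simp only; omega)
    · have := b1 q h2
      rcases (mem_dset hlj hjr).1 h1 with ⟨rfl, h⟩ | ⟨rfl, h⟩ <;> (unfold Crosses; simp only; omega)
    · have := b2 q h2
      rcases (mem_dset hlj hjr).1 h1 with ⟨rfl, h⟩ | ⟨rfl, h⟩ <;> (unfold Crosses; simp only; omega)
    · rcases (mem_dset hlj hjr).1 h1 with ⟨rfl, h⟩ | ⟨rfl, h⟩ <;>
        rcases (mem_dset hlj hjr).1 h2 with ⟨rfl, h'⟩ | ⟨rfl, h'⟩ <;> (unfold Crosses; simp only; omega)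

lemma glue_sides {l r j : ℕ} {T1 T2 : Finset (ℕ × ℕ)} (hlj : l < j) (hjr : j < r) :
    IsSide l r (glue l r j T1 T2) l j ∧ IsSide l r (glue l r j T1 T2) j r := by
  constructor
  · by_cases h : l + 2 ≤ j
    · refine Or.inr ?_
      unfold glue
      refine mem_union_right _ ?_
      rw [mem_dset hlj hjr]
      exact Or.inl ⟨rfl, h⟩
    · exact Or.inl (Or.inl ⟨le_refl l, by omega, by omega⟩)
  · by_cases h : j + 2 ≤ r
    · refine Or.inr ?_
      unfold glue
      refine mem_union_right _ ?_
      rw [mem_dset hlj hjr]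
      exact Or.inr ⟨rfl, h⟩
    · exact Or.inl (Or.inl ⟨by omega, by omega, le_refl r⟩)

lemma glue_triangle {l r j : ℕ} {T1 T2 : Finset (ℕ × ℕ)} (hlj : l < j) (hjr : j < r)
    (hT1 : T1 ∈ triangulations l j) (hT2 : T2 ∈ triangulations j r) :
    (l, j, r) ∈ triangles l r (glue l r j T1 T2) := by
  have hsub := (mem_triangulations.1 (glue_mem_triangulations hlj hjr hT1 hT2)).1
  rw [mem_triangles (by omega) hsub]
  obtain ⟨g1, g2⟩ := glue_sides (T1 := T1) (T2 := T2) hlj hjr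
  exact ⟨hlj, hjr, g1, g2, Or.inl (Or.inr ⟨rfl, rfl⟩)⟩
lemma glue_card {l r j : ℕ} {T1 T2 : Finset (ℕ × ℕ)} (hlj : l < j) (hjr : j < r)
    (hs1 : T1 ⊆ allDiags l j) (hs2 : T2 ⊆ allDiags j r) :
    (glue l r j T1 T2).card = T1.card + T2.card + (dset l r j).card := by
  have b1 : ∀ p ∈ T1, l ≤ p.1 ∧ p.1 + 2 ≤ p.2 ∧ p.2 ≤ j ∧ ¬(p.1 = l ∧ p.2 = j) :=
    fun p hp => diag_of_mem hs1 hp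
  have b2 : ∀ p ∈ T2, j ≤ p.1 ∧ p.1 + 2 ≤ p.2 ∧ p.2 ≤ r ∧ ¬(p.1 = j ∧ p.2 = r) :=
    fun p hp => diag_of_mem hs2 hp
  have disj12 : Disjoint T1 T2 := by
    rw [Finset.disjoint_left]
    intro p h1 h2
    have := b1 p h1; have := b2 p h2; omega
  have disj3 : Disjoint (T1 ∪ T2) (dset l r j) := by
    rw [Finset.disjoint_left]
    intro p h1 h2
    rcases (mem_dset hlj hjr).1 h2 with ⟨rfl, h⟩ | ⟨rfl, h⟩ <;>
      rcases mem_union.1 h1 with h' | h'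
    · have := b1 _ h'; dsimp only at this; omega
    · have := b2 _ h'; dsimp only at this; omega
    · have := b1 _ h'; dsimp only at this; omega
    · have := b2 _ h'; dsimp only at this; omega
  unfold glue
  rw [card_union_of_disjoint disj3, card_union_of_disjoint disj12]

/-- Every triangulation of the polygon on `{l,…,r}` decomposes along the triangle
containing the side `(l,r)`. -/
lemma exists_decomp {l r : ℕ} (hlr : l + 2 ≤ r) {T : Finset (ℕ × ℕ)}
    (hT : T ∈ triangulations l r) :
    ∃ j T1 T2, l < j ∧ j < r ∧ T1 ∈ triangulations l j ∧ T2 ∈ triangulations j r ∧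
      T = glue l r j T1 T2 := by
  obtain ⟨hsub, hcard, hNC⟩ := mem_triangulations.1 hT
  set A := (Ioo l r).filter (fun j => j = l + 1 ∨ (l, j) ∈ T) with hA
  have hmemA : l + 1 ∈ A := by
    rw [hA, mem_filter, mem_Ioo]; exact ⟨⟨by omega, by omega⟩, Or.inl rfl⟩
  obtain ⟨j, hjA, hjmax⟩ := A.exists_max_image id ⟨_, hmemA⟩
  rw [hA, mem_filter, mem_Ioo] at hjA
  obtain ⟨⟨hlj, hjr⟩, hj3⟩ := hjA
  have hjmax' : ∀ d, l < d → d < r → (l, d) ∈ T → d ≤ j := by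
    intro d h1 h2 h3
    exact hjmax d (by rw [hA, mem_filter, mem_Ioo]; exact ⟨⟨h1, h2⟩, Or.inr h3⟩)
  have hside2 : r = j + 1 ∨ (j, r) ∈ T := by
    by_cases hj1 : r = j + 1
    · exact Or.inl hj1
    right
    by_contra hnotin
    have hnc : ∀ p ∈ T, ¬ Crosses p.1 p.2 j r ∧ ¬ Crosses j r p.1 p.2 := by
      intro p hp
      obtain ⟨d1, d2, d3, d4⟩ := diag_of_mem hsub hp
      have key : ¬ (p.1 < j ∧ j < p.2 ∧ p.2 < r) := by
        rintro ⟨k1, k2, k3⟩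
        by_cases hpl : l < p.1
        · rcases hj3 with hj' | hmem
          · omega
          · exact hNC _ hmem _ hp (Or.inl ⟨hpl, by omega, by omega⟩)
        · have hp1 : p.1 = l := by omega
          have hpe : p = (l, p.2) := Prod.ext_iff.mpr ⟨hp1, rfl⟩
          rw [hpe] at hp
          have := hjmax' p.2 (by omega) (by omega) hp
          omega
      constructor <;> (intro hcr; unfold Crosses at hcr; omega)
    have hins : insert (j, r) T ⊆ allDiags l r := by
      intro p hp
      rcases mem_insert.1 hp with rfl | hp
      · rw [mem_allDiags]; exact ⟨by omega, by omega, le_refl r, by omega⟩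
      · exact hsub hp
    have hNCins : NC (insert (j, r) T) := by
      intro p hp q hq
      rcases mem_insert.1 hp with rfl | hp <;> rcases mem_insert.1 hq with rfl | hq
      · unfold Crosses; dsimp only; omega
      · exact (hnc q hq).2
      · exact (hnc p hp).1
      · exact hNC p hp q hq
    have hcard' := noncross_card_le (r - l) l r _ (by omega) hins hNCins
    rw [card_insert_of_notMem hnotin, hcard] at hcard'
    omega
  have hsplit : ∀ p ∈ T, p ≠ (l, j) → p ≠ (j, r) → p.2 ≤ j ∨ j ≤ p.1 := by
    intro p hp hne1 hne2
    obtain ⟨d1, d2, d3, d4⟩ := diag_of_mem hsub hp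
    by_contra hcon
    push_neg at hcon
    obtain ⟨h1, h2⟩ := hcon
    by_cases hpl : l < p.1
    · rcases hj3 with hj' | hmem
      · omega
      · exact hNC _ hmem _ hp (Or.inl ⟨hpl, by omega, by omega⟩)
    · have hp1 : p.1 = l := by omega
      by_cases hp2 : p.2 < r
      · have hpe : p = (l, p.2) := Prod.ext_iff.mpr ⟨hp1, rfl⟩
        rw [hpe] at hp
        have := hjmax' p.2 (by omega) hp2 hp
        omega
      · omega
  set T1 := (T.filter (fun p => p.2 ≤ j)).erase (l, j) with hT1def
  set T2 := (T.filter (fun p => j ≤ p.1)).erase (j, r) with hT2def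
  have hsubT1 : T1 ⊆ allDiags l j := by
    intro p hp
    have hpT := mem_of_mem_erase hp
    have hle : p.2 ≤ j := (mem_filter.1 hpT).2
    obtain ⟨d1, d2, d3, d4⟩ := diag_of_mem hsub (mem_of_mem_filter _ hpT)
    rw [mem_allDiags]
    refine ⟨d1, d2, hle, ?_⟩
    rintro ⟨e1, e2⟩
    exact ne_of_mem_erase hp (Prod.ext_iff.mpr ⟨e1, e2⟩)
  have hsubT2 : T2 ⊆ allDiags j r := by
    intro p hp
    have hpT := mem_of_mem_erase hp
    have hle : j ≤ p.1 := (mem_filter.1 hpT).2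
    obtain ⟨d1, d2, d3, d4⟩ := diag_of_mem hsub (mem_of_mem_filter _ hpT)
    rw [mem_allDiags]
    refine ⟨hle, d2, d3, ?_⟩
    rintro ⟨e1, e2⟩
    exact ne_of_mem_erase hp (Prod.ext_iff.mpr ⟨e1, e2⟩)
  have hmemT1 : ∀ p ∈ T1, p ∈ T := fun p hp => mem_of_mem_filter _ (mem_of_mem_erase hp)
  have hmemT2 : ∀ p ∈ T2, p ∈ T := fun p hp => mem_of_mem_filter _ (mem_of_mem_erase hp)
  have hNC1 : NC T1 := fun p hp q hq => hNC p (hmemT1 p hp) q (hmemT1 q hq)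
  have hNC2 : NC T2 := fun p hp q hq => hNC p (hmemT2 p hp) q (hmemT2 q hq)
  have hcle1 := noncross_card_le (j - l) l j _ (by omega) hsubT1 hNC1
  have hcle2 := noncross_card_le (r - j) j r _ (by omega) hsubT2 hNC2
  have hglue : T = glue l r j T1 T2 := by
    ext p
    unfold glue
    simp only [mem_union]
    constructor
    · intro hp
      obtain ⟨d1, d2, d3, d4⟩ := diag_of_mem hsub hp
      by_cases he1 : p = (l, j)
      · right
        rw [mem_dset hlj hjr]
        left
        refine ⟨he1, ?_⟩
        rw [he1] at d2; dsimp only at d2; omega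
      by_cases he2 : p = (j, r)
      · right
        rw [mem_dset hlj hjr]
        right
        refine ⟨he2, ?_⟩
        rw [he2] at d2; dsimp only at d2; omega
      rcases hsplit p hp he1 he2 with h | h
      · exact Or.inl (Or.inl (mem_erase.2 ⟨he1, mem_filter.2 ⟨hp, h⟩⟩))
      · exact Or.inl (Or.inr (mem_erase.2 ⟨he2, mem_filter.2 ⟨hp, h⟩⟩))
    · intro hp
      rcases hp with (h | h) | h
      · exact hmemT1 p h
      · exact hmemT2 p h
      · rcases (mem_dset hlj hjr).1 h with ⟨rfl, hd⟩ | ⟨rfl, hd⟩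
        · rcases hj3 with hj' | hmem
          · omega
          · exact hmem
        · rcases hside2 with hj' | hmem
          · omega
          · exact hmem
  have hcardglue : T.card = T1.card + T2.card + (dset l r j).card := by
    rw [hglue, glue_card hlj hjr hsubT1 hsubT2]
  have hdc := card_dset hlj hjr
  have hforce : T1.card = j - l - 2 ∧ T2.card = r - j - 2 := by
    rw [hcard] at hcardglue
    split_ifs at hdc <;> omega
  exact ⟨j, T1, T2, hlj, hjr, mem_triangulations.2 ⟨hsubT1, hforce.1, hNC1⟩,
    mem_triangulations.2 ⟨hsubT2, hforce.2, hNC2⟩, hglue⟩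
lemma glue_recover1 {l r j : ℕ} {T1 T2 : Finset (ℕ × ℕ)} (hlj : l < j) (hjr : j < r)
    (hT1 : T1 ⊆ allDiags l j) (hT2 : T2 ⊆ allDiags j r) :
    ((glue l r j T1 T2).filter (fun p => p.2 ≤ j)).erase (l, j) = T1 := by
  ext p
  simp only [mem_erase, mem_filter]
  constructor
  · rintro ⟨hne, hmem, hle⟩
    rcases mem_union.1 hmem with h | h
    · rcases mem_union.1 h with h' | h'
      · exact h'
      · have := diag_of_mem hT2 h'; omega
    · rcases (mem_dset hlj hjr).1 h with ⟨rfl, hd⟩ | ⟨rfl, hd⟩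
      · exact absurd rfl hne
      · dsimp only at hle; omega
  · intro hp
    have hd := diag_of_mem hT1 hp
    refine ⟨?_, mem_union_left _ (mem_union_left _ hp), by omega⟩
    rintro rfl
    dsimp only at hd
    omega

lemma glue_recover2 {l r j : ℕ} {T1 T2 : Finset (ℕ × ℕ)} (hlj : l < j) (hjr : j < r)
    (hT1 : T1 ⊆ allDiags l j) (hT2 : T2 ⊆ allDiags j r) :
    ((glue l r j T1 T2).filter (fun p => j ≤ p.1)).erase (j, r) = T2 := by
  ext p
  simp only [mem_erase, mem_filter]
  constructor
  · rintro ⟨hne, hmem, hle⟩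
    rcases mem_union.1 hmem with h | h
    · rcases mem_union.1 h with h' | h'
      · have := diag_of_mem hT1 h'; omega
      · exact h'
    · rcases (mem_dset hlj hjr).1 h with ⟨rfl, hd⟩ | ⟨rfl, hd⟩
      · dsimp only at hle; omega
      · exact absurd rfl hne
  · intro hp
    have hd := diag_of_mem hT2 hp
    refine ⟨?_, mem_union_left _ (mem_union_right _ hp), by omega⟩
    rintro rfl
    dsimp only at hd
    omega

lemma glue_j_eq {l r j j' : ℕ} {T1 T2 T1' T2' : Finset (ℕ × ℕ)} (hlj : l < j) (hjr : j < r)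
    (hlj' : l < j') (hjr' : j' < r)
    (hT1 : T1 ∈ triangulations l j) (hT2 : T2 ∈ triangulations j r)
    (hT1' : T1' ∈ triangulations l j') (hT2' : T2' ∈ triangulations j' r)
    (heq : glue l r j T1 T2 = glue l r j' T1' T2') : j = j' := by
  have hm := glue_mem_triangulations hlj hjr hT1 hT2
  obtain ⟨hsub, -, hNC⟩ := mem_triangulations.1 hm
  have ht := glue_triangle hlj hjr hT1 hT2
  have ht' := glue_triangle hlj' hjr' hT1' hT2'
  rw [← heq] at ht'
  have := triangle_unique_lr (by omega) hsub hNC ht ht'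
    (Or.inr (Or.inr rfl)) (Or.inr (Or.inr rfl))
  simp only [Prod.mk.injEq] at this
  exact this.2.1

lemma card_triangulations_aux (s : ℕ) : ∀ l r, r ≤ l + s → l + 1 ≤ r →
    (triangulations l r).card = catalan (r - l - 1) := by
  induction s with
  | zero => intro l r h1 h2; omega
  | succ s ih =>
    intro l r hs h1
    by_cases h2 : l + 2 ≤ r
    · have hrep : triangulations l r = (Ioo l r).biUnion
          (fun j => ((triangulations l j ×ˢ triangulations j r).image
            (fun P => glue l r j P.1 P.2))) := by
        ext T
        simp only [mem_biUnion, mem_image, mem_product, mem_Ioo]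
        constructor
        · intro hT
          obtain ⟨j, T1, T2, hlj, hjr, m1, m2, he⟩ := exists_decomp h2 hT
          exact ⟨j, ⟨hlj, hjr⟩, (T1, T2), ⟨m1, m2⟩, he.symm⟩
        · rintro ⟨j, ⟨hlj, hjr⟩, ⟨T1, T2⟩, ⟨m1, m2⟩, rfl⟩
          exact glue_mem_triangulations hlj hjr m1 m2
      have hdisj : (Ioo l r : Set ℕ).Pairwise fun j j' => Disjoint
          ((triangulations l j ×ˢ triangulations j r).image (fun P => glue l r j P.1 P.2))
          ((triangulations l j' ×ˢ triangulations j' r).image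
            (fun P => glue l r j' P.1 P.2)) := by
        intro j hj j' hj' hne
        simp only [Set.mem_setOf_eq, mem_coe, mem_Ioo] at hj hj'
        rw [Finset.disjoint_left]
        rintro T hT hT'
        obtain ⟨⟨T1, T2⟩, hm, rfl⟩ := Finset.mem_image.1 hT
        obtain ⟨⟨T1', T2'⟩, hm', heq⟩ := Finset.mem_image.1 hT'
        rw [mem_product] at hm hm'
        exact hne (glue_j_eq hj.1 hj.2 hj'.1 hj'.2 hm.1 hm.2 hm'.1 hm'.2 heq.symm)
      rw [hrep, card_biUnion hdisj]
      have hterm : ∀ j ∈ Ioo l r,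
          (((triangulations l j ×ˢ triangulations j r).image
            (fun P => glue l r j P.1 P.2))).card = catalan (j - l - 1) * catalan (r - j - 1) := by
        intro j hj
        rw [mem_Ioo] at hj
        rw [Finset.card_image_of_injOn, card_product,
          ih l j (by omega) (by omega), ih j r (by omega) (by omega)]
        rintro ⟨T1, T2⟩ h1' ⟨T1', T2'⟩ h2' heq
        dsimp only at heq
        simp only [mem_coe, mem_product] at h1' h2'
        have hs1 := (mem_triangulations.1 h1'.1).1
        have hs2 := (mem_triangulations.1 h1'.2).1
        have hs1' := (mem_triangulations.1 h2'.1).1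
        have hs2' := (mem_triangulations.1 h2'.2).1
        have e1 : T1 = T1' := by
          rw [← glue_recover1 hj.1 hj.2 hs1 hs2, heq, glue_recover1 hj.1 hj.2 hs1' hs2']
        have e2 : T2 = T2' := by
          rw [← glue_recover2 hj.1 hj.2 hs1 hs2, heq, glue_recover2 hj.1 hj.2 hs1' hs2']
        rw [e1, e2]
      rw [Finset.sum_congr rfl hterm]
      have hre : ∑ j ∈ Ioo l r, catalan (j - l - 1) * catalan (r - j - 1) =
          ∑ i ∈ range (r - l - 1), catalan i * catalan ((r - l - 2) - i) := by
        refine Finset.sum_nbij' (fun j => j - l - 1) (fun i => i + l + 1) ?_ ?_ ?_ ?_ ?_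
        · intro a ha; rw [mem_Ioo] at ha; rw [mem_range]; omega
        · intro a ha; rw [mem_range] at ha; rw [mem_Ioo]; omega
        · intro a ha; rw [mem_Ioo] at ha; omega
        · intro a ha; rw [mem_range] at ha; omega
        · intro a ha; rw [mem_Ioo] at ha
          have e1 : r - a - 1 = (r - l - 2) - (a - l - 1) := by omega
          rw [e1]
      rw [hre]
      have hm : r - l - 1 = (r - l - 2) + 1 := by omega
      rw [hm, catalan_succ]
      rw [← Fin.sum_univ_eq_sum_range (fun i => catalan i * catalan ((r - l - 2) - i))]
    · -- r = l + 1
      have hr : r = l + 1 := by omega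
      subst hr
      have hempty : allDiags l (l + 1) = ∅ := by
        ext p
        rw [mem_allDiags]
        simp only [notMem_empty, iff_false]
        intro h
        obtain ⟨h1, h2, h3, h4⟩ := h
        omega
      have : triangulations l (l + 1) = {∅} := by
        ext T
        rw [mem_triangulations, hempty]
        simp only [Finset.subset_empty, mem_singleton]
        constructor
        · rintro ⟨rfl, -, -⟩; rfl
        · rintro rfl
          refine ⟨rfl, by simp, ?_⟩
          intro d hd
          simp at hd
      rw [this, card_singleton]
      have : l + 1 - l - 1 = 0 := by omega
      rw [this, catalan_zero]
lemma glue_subset {l r j : ℕ} {T1 T2 : Finset (ℕ × ℕ)} (hlj : l < j) (hjr : j < r)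
    (hs1 : T1 ⊆ allDiags l j) (hs2 : T2 ⊆ allDiags j r) :
    glue l r j T1 T2 ⊆ allDiags l r := by
  intro p hp
  rcases mem_union.1 hp with h | h
  · rcases mem_union.1 h with h' | h'
    · have := diag_of_mem hs1 h'; rw [mem_allDiags]
      exact ⟨by omega, by omega, by omega, by omega⟩
    · have := diag_of_mem hs2 h'; rw [mem_allDiags]
      exact ⟨by omega, by omega, by omega, by omega⟩
  · exact (mem_filter.1 h).1

lemma triangles_lift_left {l r j : ℕ} {T1 T2 : Finset (ℕ × ℕ)} (hlj : l < j) (hjr : j < r)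
    (hs1 : T1 ⊆ allDiags l j) (hs2 : T2 ⊆ allDiags j r) {t : ℕ × ℕ × ℕ}
    (ht : t ∈ triangles l j T1) : t ∈ triangles l r (glue l r j T1 T2) := by
  rw [mem_triangles hlj hs1] at ht
  rw [mem_triangles (by omega) (glue_subset hlj hjr hs1 hs2)]
  have hlift : ∀ x y, IsSide l j T1 x y → IsSide l r (glue l r j T1 T2) x y := by
    intro x y hxy
    rcases hxy with (⟨e1, e2, e3⟩ | ⟨e1, e2⟩) | hm
    · exact Or.inl (Or.inl ⟨e1, e2, by omega⟩)
    · subst e1; subst e2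
      by_cases hd : x + 2 ≤ y
      · refine Or.inr (mem_union_right _ ?_)
        rw [mem_dset hlj hjr]
        exact Or.inl ⟨rfl, hd⟩
      · exact Or.inl (Or.inl ⟨le_refl x, by omega, by omega⟩)
    · exact Or.inr (mem_union_left _ (mem_union_left _ hm))
  exact ⟨ht.1, ht.2.1, hlift _ _ ht.2.2.1, hlift _ _ ht.2.2.2.1, hlift _ _ ht.2.2.2.2⟩

lemma triangles_lift_right {l r j : ℕ} {T1 T2 : Finset (ℕ × ℕ)} (hlj : l < j) (hjr : j < r)
    (hs1 : T1 ⊆ allDiags l j) (hs2 : T2 ⊆ allDiags j r) {t : ℕ × ℕ × ℕ}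
    (ht : t ∈ triangles j r T2) : t ∈ triangles l r (glue l r j T1 T2) := by
  rw [mem_triangles hjr hs2] at ht
  rw [mem_triangles (by omega) (glue_subset hlj hjr hs1 hs2)]
  have hlift : ∀ x y, IsSide j r T2 x y → IsSide l r (glue l r j T1 T2) x y := by
    intro x y hxy
    rcases hxy with (⟨e1, e2, e3⟩ | ⟨e1, e2⟩) | hm
    · exact Or.inl (Or.inl ⟨by omega, e2, e3⟩)
    · subst e1; subst e2
      by_cases hd : x + 2 ≤ y
      · refine Or.inr (mem_union_right _ ?_)
        rw [mem_dset hlj hjr]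
        exact Or.inr ⟨rfl, hd⟩
      · exact Or.inl (Or.inl ⟨by omega, by omega, le_refl y⟩)
    · exact Or.inr (mem_union_left _ (mem_union_right _ hm))
  exact ⟨ht.1, ht.2.1, hlift _ _ ht.2.2.1, hlift _ _ ht.2.2.2.1, hlift _ _ ht.2.2.2.2⟩

/-- Every boundary edge of the polygon lies in at least one triangle. -/
lemma exists_triangle_on_edge (s : ℕ) : ∀ l r, r ≤ l + s → l + 2 ≤ r →
    ∀ T ∈ triangulations l r,
      (∀ i, l ≤ i → i + 1 ≤ r → ∃ t ∈ triangles l r T, SideOf (i, i + 1) t) ∧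
      (∃ t ∈ triangles l r T, SideOf (l, r) t) := by
  induction s with
  | zero => intro l r h1 h2; omega
  | succ s ih =>
    intro l r hs h2 T hT
    obtain ⟨j, T1, T2, hlj, hjr, m1, m2, rfl⟩ := exists_decomp h2 hT
    have hsT1 := (mem_triangulations.1 m1).1
    have hsT2 := (mem_triangulations.1 m2).1
    have htri := glue_triangle hlj hjr m1 m2
    refine ⟨?_, ⟨(l, j, r), htri, Or.inr (Or.inr rfl)⟩⟩
    intro i hi1 hi2
    by_cases hij : i + 1 ≤ j
    · by_cases hj1 : l + 2 ≤ j
      · obtain ⟨hleft, -⟩ := ih l j (by omega) hj1 T1 m1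
        obtain ⟨t, ht, hside⟩ := hleft i hi1 hij
        exact ⟨t, triangles_lift_left hlj hjr hsT1 hsT2 ht, hside⟩
      · refine ⟨(l, j, r), htri, Or.inl ?_⟩
        refine Prod.ext_iff.mpr ⟨by dsimp only; omega, by dsimp only; omega⟩
    · by_cases hj2 : j + 2 ≤ r
      · obtain ⟨hright, -⟩ := ih j r (by omega) hj2 T2 m2
        obtain ⟨t, ht, hside⟩ := hright i (by omega) hi2
        exact ⟨t, triangles_lift_right hlj hjr hsT1 hsT2 ht, hside⟩
      · refine ⟨(l, j, r), htri, Or.inr (Or.inl ?_)⟩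
        refine Prod.ext_iff.mpr ⟨by dsimp only; omega, by dsimp only; omega⟩
/-- The boundary edges of the polygon on `{l,…,r}`, as a finset. -/
noncomputable def edgesFS (l r : ℕ) : Finset (ℕ × ℕ) :=
  ((Ico l r).image (fun i => (i, i + 1))) ∪ {(l, r)}

lemma mem_edgesFS {l r : ℕ} (hlr : l + 2 ≤ r) {p : ℕ × ℕ} :
    p ∈ edgesFS l r ↔ IsEdge l r p.1 p.2 := by
  unfold edgesFS IsEdge
  simp only [mem_union, mem_image, mem_Ico, mem_singleton]
  constructor
  · rintro (⟨i, ⟨hi1, hi2⟩, rfl⟩ | rfl)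
    · exact Or.inl ⟨hi1, rfl, by omega⟩
    · exact Or.inr ⟨rfl, rfl⟩
  · rintro (⟨h1, h2, h3⟩ | ⟨h1, h2⟩)
    · exact Or.inl ⟨p.1, ⟨h1, by omega⟩, Prod.ext_iff.mpr ⟨rfl, h2.symm⟩⟩
    · exact Or.inr (Prod.ext_iff.mpr ⟨h1, h2⟩)

lemma card_edgesFS {l r : ℕ} (hlr : l + 2 ≤ r) : (edgesFS l r).card = r - l + 1 := by
  unfold edgesFS
  rw [card_union_of_disjoint, card_singleton, Finset.card_image_of_injective,
    Nat.card_Ico]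
  · intro a b hab
    simpa [Prod.ext_iff] using hab
  · rw [Finset.disjoint_right]
    intro p hp
    rw [mem_singleton] at hp
    subst hp
    simp only [mem_image, mem_Ico, Prod.mk.injEq, not_exists]
    rintro i ⟨⟨h1, h2⟩, rfl, h4⟩
    omega

lemma card_filter_three {FS : Finset (ℕ × ℕ)} {x y z : ℕ × ℕ}
    (hxy : x ≠ y) (hxz : x ≠ z) (hyz : y ≠ z) :
    (FS.filter (fun e => e = x ∨ e = y ∨ e = z)).card =
      (if x ∈ FS then 1 else 0) + (if y ∈ FS then 1 else 0) + (if z ∈ FS then 1 else 0) := by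
  have heq : FS.filter (fun e => e = x ∨ e = y ∨ e = z) =
      ({x, y, z} : Finset (ℕ × ℕ)).filter (fun e => e ∈ FS) := by
    ext e
    simp only [mem_filter, mem_insert, mem_singleton]
    tauto
  rw [heq]
  rw [filter_insert, filter_insert, filter_singleton]
  by_cases hx : x ∈ FS <;> by_cases hy : y ∈ FS <;> by_cases hz : z ∈ FS <;>
    simp [hx, hy, hz, hxy, hxz, hyz]

lemma sum_edgeCount {l r : ℕ} (hlr : l + 2 ≤ r) {T : Finset (ℕ × ℕ)}
    (hT : T ∈ triangulations l r) :
    ∑ t ∈ triangles l r T, edgeCount l r t.1 t.2.1 t.2.2 = r - l + 1 := by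
  obtain ⟨hsub, hcard, hNC⟩ := mem_triangulations.1 hT
  have hec : ∀ t ∈ triangles l r T, edgeCount l r t.1 t.2.1 t.2.2 =
      ∑ e ∈ edgesFS l r, (if SideOf e t then 1 else 0) := by
    intro t ht
    obtain ⟨hb1, hb2, hb3, hb4⟩ := triangle_bounds (by omega) hsub ht
    rw [← Finset.sum_filter]
    rw [Finset.sum_const, smul_eq_mul, mul_one]
    have hfc : (edgesFS l r).filter (fun e => SideOf e t) =
        (edgesFS l r).filter
          (fun e => e = (t.1, t.2.1) ∨ e = (t.2.1, t.2.2) ∨ e = (t.1, t.2.2)) := by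
      apply Finset.filter_congr
      intro x hx
      exact Iff.rfl
    have d1 : ((t.1, t.2.1) : ℕ × ℕ) ≠ (t.2.1, t.2.2) := by simp [Prod.ext_iff]; omega
    have d2 : ((t.1, t.2.1) : ℕ × ℕ) ≠ (t.1, t.2.2) := by simp [Prod.ext_iff]; omega
    have d3 : ((t.2.1, t.2.2) : ℕ × ℕ) ≠ (t.1, t.2.2) := by simp [Prod.ext_iff]; omega
    rw [hfc, card_filter_three d1 d2 d3]
    unfold edgeCount
    simp only [mem_edgesFS hlr]
  rw [Finset.sum_congr rfl hec, Finset.sum_comm]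
  have hone : ∀ e ∈ edgesFS l r, ∑ t ∈ triangles l r T, (if SideOf e t then 1 else 0) = 1 := by
    intro e he
    rw [← Finset.sum_filter, Finset.sum_const, smul_eq_mul, mul_one]
    rw [Finset.card_eq_one]
    rw [mem_edgesFS hlr] at he
    rcases he with ⟨he1, he2, he3⟩ | ⟨he1, he2⟩
    · have hepair : e = (e.1, e.1 + 1) := Prod.ext_iff.mpr ⟨rfl, he2⟩
      obtain ⟨hex, -⟩ := exists_triangle_on_edge (r - l) l r (by omega) hlr T hT
      obtain ⟨t0, ht0, hs0⟩ := hex e.1 he1 (by omega)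
      refine ⟨t0, Finset.eq_singleton_iff_unique_mem.mpr ⟨mem_filter.2 ⟨ht0, ?_⟩, ?_⟩⟩
      · rw [hepair]; exact hs0
      · intro t ht
        obtain ⟨ht1, ht2⟩ := mem_filter.1 ht
        rw [hepair] at ht2
        exact triangle_unique_consec (by omega) hsub hNC ht1 ht0 ht2 hs0
    · have hepair : e = (l, r) := Prod.ext_iff.mpr ⟨he1, he2⟩
      obtain ⟨-, t0, ht0, hs0⟩ := exists_triangle_on_edge (r - l) l r (by omega) hlr T hT
      refine ⟨t0, Finset.eq_singleton_iff_unique_mem.mpr ⟨mem_filter.2 ⟨ht0, ?_⟩, ?_⟩⟩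
      · rw [hepair]; exact hs0
      · intro t ht
        obtain ⟨ht1, ht2⟩ := mem_filter.1 ht
        rw [hepair] at ht2
        exact triangle_unique_lr (by omega) hsub hNC ht1 ht0 ht2 hs0
  rw [Finset.sum_congr rfl hone, Finset.sum_const, smul_eq_mul, mul_one, card_edgesFS hlr]
lemma edgeCount_le_two {l r : ℕ} (hlr : l + 3 ≤ r) {T : Finset (ℕ × ℕ)}
    (hsub : T ⊆ allDiags l r) {t : ℕ × ℕ × ℕ} (ht : t ∈ triangles l r T) :
    edgeCount l r t.1 t.2.1 t.2.2 ≤ 2 := by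
  obtain ⟨hb1, hb2, hb3, hb4⟩ := triangle_bounds (by omega) hsub ht
  unfold edgeCount IsEdge
  split_ifs <;> omega

lemma oneSide_two_ear {n : ℕ} (hn : 4 ≤ n) {T : Finset (ℕ × ℕ)}
    (hT : T ∈ triangulations 1 n) :
    oneSideCount n T + 2 * earCount n T = n := by
  obtain ⟨hsub, -, -⟩ := mem_triangulations.1 hT
  have hsum := sum_edgeCount (l := 1) (r := n) (by omega) hT
  have hle : ∀ t ∈ triangles 1 n T, edgeCount 1 n t.1 t.2.1 t.2.2 ≤ 2 :=
    fun t ht => edgeCount_le_two (by omega) hsub ht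
  have hdec : ∀ t ∈ triangles 1 n T, edgeCount 1 n t.1 t.2.1 t.2.2 =
      (if edgeCount 1 n t.1 t.2.1 t.2.2 = 1 then 1 else 0) +
      2 * (if 2 ≤ edgeCount 1 n t.1 t.2.1 t.2.2 then 1 else 0) := by
    intro t ht
    have := hle t ht
    split_ifs <;> omega
  rw [Finset.sum_congr rfl hdec, Finset.sum_add_distrib, ← Finset.mul_sum] at hsum
  have e1 : ∑ t ∈ triangles 1 n T, (if edgeCount 1 n t.1 t.2.1 t.2.2 = 1 then 1 else 0) =
      oneSideCount n T := by
    rw [← Finset.sum_filter, Finset.sum_const, smul_eq_mul, mul_one]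
    rfl
  have e2 : ∑ t ∈ triangles 1 n T, (if 2 ≤ edgeCount 1 n t.1 t.2.1 t.2.2 then 1 else 0) =
      earCount n T := by
    rw [← Finset.sum_filter, Finset.sum_const, smul_eq_mul, mul_one]
    rfl
  rw [e1, e2] at hsum
  omega
/-- Delete vertex `w`, relabelling. -/
def vmapD (w : ℕ) (p : ℕ × ℕ) : ℕ × ℕ :=
  (if p.1 < w then p.1 else p.1 - 1, if p.2 < w then p.2 else p.2 - 1)

/-- Insert a vertex at `w`, relabelling. -/
def vmapU (w : ℕ) (p : ℕ × ℕ) : ℕ × ℕ :=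
  (if p.1 < w then p.1 else p.1 + 1, if p.2 < w then p.2 else p.2 + 1)

lemma card_diag_filter (n w p q : ℕ) (hn : 4 ≤ n) (hw1 : 1 ≤ w) (hwn : w ≤ n)
    (hd0 : IsDiag 1 n p q)
    (hsh1 : ∀ c d, IsDiag 1 n c d → ¬ Crosses c d p q → ¬ Crosses p q c d →
      ¬(c = p ∧ d = q) → c ≠ w ∧ d ≠ w ∧ ¬(c = w - 1 ∧ d = w + 1))
    (hsh2 : ∀ c d, IsDiag 1 n c d → c ≠ w → d ≠ w →
      ¬ Crosses c d p q ∧ ¬ Crosses p q c d)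
    (hsh3 : ∀ c d, IsDiag 1 (n - 1) c d →
      ¬((if c < w then c else c + 1) = p ∧ (if d < w then d else d + 1) = q))
    (hsh4 : ∀ c d, IsDiag 1 n c d → c ≠ w → d ≠ w → ¬(c = w - 1 ∧ d = w + 1) →
      ¬(c = p ∧ d = q) →
      ¬((if c < w then c else c - 1) = 1 ∧ (if d < w then d else d - 1) = n - 1)) :
    ((triangulations 1 n).filter (fun T => (p, q) ∈ T)).card = catalan (n - 3) := by
  obtain ⟨hp1, hpq, hqn, hpqne⟩ := hd0
  have hcat : (triangulations 1 (n - 1)).card = catalan (n - 3) := by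
    have h := card_triangulations_aux (n - 1) 1 (n - 1) (by omega) (by omega)
    have h2 : n - 1 - 1 - 1 = n - 3 := by omega
    rw [h2] at h
    exact h
  rw [← hcat]
  refine Finset.card_nbij' (fun T => (T.erase (p, q)).image (vmapD w))
    (fun S => insert (p, q) (S.image (vmapU w))) ?hi ?hj ?li ?ri
  case hi =>
    intro T hT
    rw [mem_coe, mem_filter] at hT
    obtain ⟨hTt, hmem⟩ := hT
    obtain ⟨hsub, hcard, hNC⟩ := mem_triangulations.1 hTt
    have hav : ∀ x ∈ T, x ≠ (p, q) → x.1 ≠ w ∧ x.2 ≠ w ∧ ¬(x.1 = w - 1 ∧ x.2 = w + 1) := by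
      intro x hx hne
      refine hsh1 x.1 x.2 (mem_allDiags.1 (hsub hx)) (hNC x hx (p, q) hmem)
        (hNC (p, q) hmem x hx) ?_
      intro hc
      exact hne (Prod.ext_iff.mpr hc)
    rw [mem_coe, mem_triangulations]
    refine ⟨?_, ?_, ?_⟩
    · intro y hy
      obtain ⟨x, hx, rfl⟩ := Finset.mem_image.1 hy
      have hxT := Finset.mem_of_mem_erase hx
      have hxa := hav x hxT (Finset.ne_of_mem_erase hx)
      have hxd := diag_of_mem hsub hxT
      have hxne : ¬(x.1 = p ∧ x.2 = q) := by
        intro hc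
        exact (Finset.ne_of_mem_erase hx) (Prod.ext_iff.mpr hc)
      rw [mem_allDiags]
      unfold vmapD IsDiag
      dsimp only
      refine ⟨?_, ?_, ?_, ?_⟩
      · split_ifs <;> omega
      · split_ifs <;> omega
      · split_ifs <;> omega
      · exact hsh4 x.1 x.2 (mem_allDiags.1 (hsub hxT)) hxa.1 hxa.2.1 hxa.2.2 hxne
    · rw [Finset.card_image_of_injOn, Finset.card_erase_of_mem hmem, hcard]
      · omega
      · intro x hx y hy hxy
        simp only [mem_coe] at hx hy
        have hxa := hav x (Finset.mem_of_mem_erase hx) (Finset.ne_of_mem_erase hx)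
        have hya := hav y (Finset.mem_of_mem_erase hy) (Finset.ne_of_mem_erase hy)
        have hxd := diag_of_mem hsub (Finset.mem_of_mem_erase hx)
        have hyd := diag_of_mem hsub (Finset.mem_of_mem_erase hy)
        unfold vmapD at hxy
        rw [Prod.ext_iff] at hxy ⊢
        dsimp only at hxy
        constructor <;> (rcases hxy with ⟨e1, e2⟩; split_ifs at e1 e2 <;> omega)
    · intro y1 hy1 y2 hy2
      obtain ⟨x1, hx1, rfl⟩ := Finset.mem_image.1 hy1
      obtain ⟨x2, hx2, rfl⟩ := Finset.mem_image.1 hy2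
      have ha1 := hav x1 (Finset.mem_of_mem_erase hx1) (Finset.ne_of_mem_erase hx1)
      have ha2 := hav x2 (Finset.mem_of_mem_erase hx2) (Finset.ne_of_mem_erase hx2)
      have hd1 := diag_of_mem hsub (Finset.mem_of_mem_erase hx1)
      have hd2 := diag_of_mem hsub (Finset.mem_of_mem_erase hx2)
      have hnc := hNC x1 (Finset.mem_of_mem_erase hx1) x2 (Finset.mem_of_mem_erase hx2)
      unfold Crosses at hnc ⊢
      unfold vmapD
      dsimp only
      split_ifs <;> omega
  case hj =>
    intro S hS
    obtain ⟨hsub, hcard, hNC⟩ := mem_triangulations.1 hS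
    rw [mem_coe, mem_filter]
    have himg : ∀ y ∈ S.image (vmapU w), y ∈ allDiags 1 n ∧ y.1 ≠ w ∧ y.2 ≠ w := by
      intro y hy
      obtain ⟨x, hx, rfl⟩ := Finset.mem_image.1 hy
      have hxd := diag_of_mem hsub hx
      unfold vmapU
      refine ⟨mem_allDiags.2 ?_, ?_, ?_⟩
      · unfold IsDiag; dsimp only; split_ifs <;> omega
      · dsimp only; split_ifs <;> omega
      · dsimp only; split_ifs <;> omega
    refine ⟨mem_triangulations.2 ⟨?_, ?_, ?_⟩, mem_insert_self _ _⟩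
    · intro y hy
      rcases mem_insert.1 hy with rfl | hy'
      · exact mem_allDiags.2 ⟨hp1, hpq, hqn, hpqne⟩
      · exact (himg y hy').1
    · have hnotmem : (p, q) ∉ S.image (vmapU w) := by
        intro hc
        obtain ⟨x, hx, hxe⟩ := Finset.mem_image.1 hc
        have hxd := diag_of_mem hsub hx
        have := hsh3 x.1 x.2 ⟨hxd.1, hxd.2.1, hxd.2.2.1, hxd.2.2.2⟩
        unfold vmapU at hxe
        rw [Prod.ext_iff] at hxe
        dsimp only at hxe
        exact this ⟨hxe.1, hxe.2⟩
      rw [card_insert_of_notMem hnotmem, Finset.card_image_of_injOn, hcard]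
      · omega
      · intro x hx y hy hxy
        have hxd := diag_of_mem hsub hx
        have hyd := diag_of_mem hsub hy
        unfold vmapU at hxy
        rw [Prod.ext_iff] at hxy ⊢
        dsimp only at hxy
        constructor <;> (rcases hxy with ⟨e1, e2⟩; split_ifs at e1 e2 <;> omega)
    · intro y1 hy1 y2 hy2
      rcases mem_insert.1 hy1 with rfl | hy1' <;> rcases mem_insert.1 hy2 with rfl | hy2'
      · unfold Crosses; dsimp only; omega
      · obtain ⟨hd, hw1', hw2'⟩ := himg y2 hy2'
        have := (hsh2 y2.1 y2.2 (mem_allDiags.1 hd) hw1' hw2').2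
        exact this
      · obtain ⟨hd, hw1', hw2'⟩ := himg y1 hy1'
        exact (hsh2 y1.1 y1.2 (mem_allDiags.1 hd) hw1' hw2').1
      · obtain ⟨x1, hx1, rfl⟩ := Finset.mem_image.1 hy1'
        obtain ⟨x2, hx2, rfl⟩ := Finset.mem_image.1 hy2'
        have hd1 := diag_of_mem hsub hx1
        have hd2 := diag_of_mem hsub hx2
        have hnc := hNC x1 hx1 x2 hx2
        unfold Crosses at hnc ⊢
        unfold vmapU
        dsimp only
        split_ifs <;> omega
  case li =>
    intro T hT
    rw [mem_coe, mem_filter] at hT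
    obtain ⟨hTt, hmem⟩ := hT
    obtain ⟨hsub, hcard, hNC⟩ := mem_triangulations.1 hTt
    have hav : ∀ x ∈ T, x ≠ (p, q) → x.1 ≠ w ∧ x.2 ≠ w ∧ ¬(x.1 = w - 1 ∧ x.2 = w + 1) := by
      intro x hx hne
      refine hsh1 x.1 x.2 (mem_allDiags.1 (hsub hx)) (hNC x hx (p, q) hmem)
        (hNC (p, q) hmem x hx) ?_
      intro hc
      exact hne (Prod.ext_iff.mpr hc)
    dsimp only
    rw [Finset.image_image]
    have hid : ∀ x ∈ T.erase (p, q), (vmapU w ∘ vmapD w) x = x := by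
      intro x hx
      have hxa := hav x (Finset.mem_of_mem_erase hx) (Finset.ne_of_mem_erase hx)
      have hxd := diag_of_mem hsub (Finset.mem_of_mem_erase hx)
      simp only [Function.comp_apply]
      unfold vmapD vmapU
      rw [Prod.ext_iff]
      dsimp only
      constructor <;> (split_ifs <;> omega)
    rw [Finset.image_congr hid, Finset.image_id', Finset.insert_erase hmem]
  case ri =>
    intro S hS
    obtain ⟨hsub, hcard, hNC⟩ := mem_triangulations.1 hS
    have hnotmem : (p, q) ∉ S.image (vmapU w) := by
      intro hc
      obtain ⟨x, hx, hxe⟩ := Finset.mem_image.1 hc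
      have hxd := diag_of_mem hsub hx
      have := hsh3 x.1 x.2 ⟨hxd.1, hxd.2.1, hxd.2.2.1, hxd.2.2.2⟩
      unfold vmapU at hxe
      rw [Prod.ext_iff] at hxe
      dsimp only at hxe
      exact this ⟨hxe.1, hxe.2⟩
    dsimp only
    rw [Finset.erase_insert hnotmem, Finset.image_image]
    have hid : ∀ x ∈ S, (vmapD w ∘ vmapU w) x = x := by
      intro x hx
      have hxd := diag_of_mem hsub hx
      simp only [Function.comp_apply]
      unfold vmapU vmapD
      rw [Prod.ext_iff]
      dsimp only
      constructor <;> (split_ifs <;> omega)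
    rw [Finset.image_congr hid, Finset.image_id']
lemma card_ear_mid {n v : ℕ} (hn : 4 ≤ n) (hv : 1 ≤ v) (hv2 : v + 2 ≤ n) :
    ((triangulations 1 n).filter (fun T => (v, v + 2) ∈ T)).card = catalan (n - 3) := by
  refine card_diag_filter n (v + 1) v (v + 2) hn (by omega) (by omega)
    ⟨hv, by omega, hv2, by omega⟩ ?_ ?_ ?_ ?_
  · intro c d hd hc1 hc2 hne
    unfold IsDiag at hd
    unfold Crosses at hc1 hc2
    omega
  · intro c d hd h1 h2
    unfold IsDiag at hd
    unfold Crosses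
    omega
  · intro c d hd
    unfold IsDiag at hd
    split_ifs <;> omega
  · intro c d hd h1 h2 h3 h4
    unfold IsDiag at hd
    split_ifs <;> omega

lemma card_ear_left {n : ℕ} (hn : 4 ≤ n) :
    ((triangulations 1 n).filter (fun T => (2, n) ∈ T)).card = catalan (n - 3) := by
  refine card_diag_filter n 1 2 n hn (by omega) (by omega)
    ⟨by omega, by omega, le_refl n, by omega⟩ ?_ ?_ ?_ ?_
  · intro c d hd hc1 hc2 hne
    unfold IsDiag at hd
    unfold Crosses at hc1 hc2
    omega
  · intro c d hd h1 h2
    unfold IsDiag at hd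
    unfold Crosses
    omega
  · intro c d hd
    unfold IsDiag at hd
    split_ifs <;> omega
  · intro c d hd h1 h2 h3 h4
    unfold IsDiag at hd
    split_ifs <;> omega

lemma card_ear_right {n : ℕ} (hn : 4 ≤ n) :
    ((triangulations 1 n).filter (fun T => (1, n - 1) ∈ T)).card = catalan (n - 3) := by
  refine card_diag_filter n n 1 (n - 1) hn (by omega) (by omega)
    ⟨le_refl 1, by omega, by omega, by omega⟩ ?_ ?_ ?_ ?_
  · intro c d hd hc1 hc2 hne
    unfold IsDiag at hd
    unfold Crosses at hc1 hc2
    omega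
  · intro c d hd h1 h2
    unfold IsDiag at hd
    unfold Crosses
    omega
  · intro c d hd
    unfold IsDiag at hd
    split_ifs <;> omega
  · intro c d hd h1 h2 h3 h4
    unfold IsDiag at hd
    split_ifs <;> omega

lemma ear_char {n a b c : ℕ} (hn : 4 ≤ n) (h1 : 1 ≤ a) (hab : a < b) (hbc : b < c)
    (hcn : c ≤ n) :
    2 ≤ edgeCount 1 n a b c ↔
      (b = a + 1 ∧ c = a + 2) ∨ (a = 1 ∧ b = 2 ∧ c = n) ∨ (a = 1 ∧ b = n - 1 ∧ c = n) := by
  unfold edgeCount IsEdge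
  split_ifs <;> omega

lemma cand_mem_iff_mid {n v : ℕ} (hn : 4 ≤ n) (hv : 1 ≤ v) (hv2 : v + 2 ≤ n)
    {T : Finset (ℕ × ℕ)} (hT : T ∈ triangulations 1 n) :
    ((v, v + 1, v + 2) ∈ triangles 1 n T) ↔ (v, v + 2) ∈ T := by
  obtain ⟨hsub, -, -⟩ := mem_triangulations.1 hT
  rw [mem_triangles (by omega) hsub]
  dsimp only
  constructor
  · rintro ⟨-, -, -, -, h5⟩
    rcases h5 with he | hm
    · exfalso; unfold IsEdge at he; omega
    · exact hm
  · intro hm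
    exact ⟨by omega, by omega, Or.inl (Or.inl ⟨hv, rfl, by omega⟩),
      Or.inl (Or.inl ⟨by omega, rfl, by omega⟩), Or.inr hm⟩

lemma cand_mem_iff_left {n : ℕ} (hn : 4 ≤ n) {T : Finset (ℕ × ℕ)}
    (hT : T ∈ triangulations 1 n) :
    ((1, 2, n) ∈ triangles 1 n T) ↔ (2, n) ∈ T := by
  obtain ⟨hsub, -, -⟩ := mem_triangulations.1 hT
  rw [mem_triangles (by omega) hsub]
  dsimp only
  constructor
  · rintro ⟨-, -, -, h4, -⟩
    rcases h4 with he | hm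
    · exfalso; unfold IsEdge at he; omega
    · exact hm
  · intro hm
    exact ⟨by omega, by omega, Or.inl (Or.inl ⟨le_refl 1, rfl, by omega⟩),
      Or.inr hm, Or.inl (Or.inr ⟨rfl, rfl⟩)⟩

lemma cand_mem_iff_right {n : ℕ} (hn : 4 ≤ n) {T : Finset (ℕ × ℕ)}
    (hT : T ∈ triangulations 1 n) :
    ((1, n - 1, n) ∈ triangles 1 n T) ↔ (1, n - 1) ∈ T := by
  obtain ⟨hsub, -, -⟩ := mem_triangulations.1 hT
  rw [mem_triangles (by omega) hsub]
  dsimp only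
  constructor
  · rintro ⟨-, -, h3, -, -⟩
    rcases h3 with he | hm
    · exfalso; unfold IsEdge at he; omega
    · exact hm
  · intro hm
    refine ⟨by omega, by omega, Or.inr hm, Or.inl (Or.inl ⟨by omega, by omega, le_refl n⟩),
      Or.inl (Or.inr ⟨rfl, rfl⟩)⟩
/-- The candidate ear triangles. -/
noncomputable def cands (n : ℕ) : Finset (ℕ × ℕ × ℕ) :=
  ((Ico 1 (n - 1)).image (fun v => (v, v + 1, v + 2))) ∪ {(1, 2, n), (1, n - 1, n)}

lemma mem_cands {n : ℕ} (hn : 4 ≤ n) {t : ℕ × ℕ × ℕ} :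
    t ∈ cands n ↔ (∃ v, 1 ≤ v ∧ v + 2 ≤ n ∧ t = (v, v + 1, v + 2)) ∨
      t = (1, 2, n) ∨ t = (1, n - 1, n) := by
  unfold cands
  simp only [mem_union, mem_image, mem_Ico, mem_insert, mem_singleton]
  constructor
  · rintro (⟨v, ⟨h1, h2⟩, rfl⟩ | h)
    · exact Or.inl ⟨v, h1, by omega, rfl⟩
    · exact Or.inr h
  · rintro (⟨v, h1, h2, rfl⟩ | h)
    · exact Or.inl ⟨v, ⟨h1, by omega⟩, rfl⟩
    · exact Or.inr h

lemma card_cands {n : ℕ} (hn : 4 ≤ n) : (cands n).card = n := by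
  unfold cands
  rw [card_union_of_disjoint, Finset.card_image_of_injective, Nat.card_Ico]
  · rw [card_insert_of_notMem, card_singleton]
    · omega
    · rw [mem_singleton]
      simp only [Prod.mk.injEq]
      omega
  · intro a b hab
    simp only [Prod.mk.injEq] at hab
    omega
  · rw [Finset.disjoint_left]
    rintro t ht hmem
    obtain ⟨v, hv, rfl⟩ := Finset.mem_image.1 ht
    rw [mem_Ico] at hv
    rcases mem_insert.1 hmem with he | he
    · simp only [Prod.mk.injEq] at he; omega
    · rw [mem_singleton] at he
      simp only [Prod.mk.injEq] at he; omega

lemma sum_earCount {n : ℕ} (hn : 4 ≤ n) :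
    ∑ T ∈ triangulations 1 n, earCount n T = n * catalan (n - 3) := by
  have hear : ∀ T ∈ triangulations 1 n, earCount n T =
      ∑ t ∈ cands n, (if t ∈ triangles 1 n T then 1 else 0) := by
    intro T hT
    obtain ⟨hsub, hcard, hNC⟩ := mem_triangulations.1 hT
    rw [← Finset.sum_filter, Finset.sum_const, smul_eq_mul, mul_one]
    unfold earCount
    congr 1
    ext t
    simp only [mem_filter]
    constructor
    · rintro ⟨h1, h2⟩
      obtain ⟨hb1, hb2, hb3, hb4⟩ := triangle_bounds (by omega) hsub h1
      rw [ear_char hn hb1 hb2 hb3 hb4] at h2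
      refine ⟨(mem_cands hn).2 ?_, h1⟩
      rcases h2 with ⟨e1, e2⟩ | ⟨e1, e2, e3⟩ | ⟨e1, e2, e3⟩
      · refine Or.inl ⟨t.1, hb1, by omega, ?_⟩
        rw [Prod.ext_iff]
        exact ⟨rfl, Prod.ext_iff.mpr ⟨by dsimp only; omega, by dsimp only; omega⟩⟩
      · refine Or.inr (Or.inl ?_)
        rw [Prod.ext_iff]
        exact ⟨e1, Prod.ext_iff.mpr ⟨by dsimp only; omega, by dsimp only; omega⟩⟩
      · refine Or.inr (Or.inr ?_)
        rw [Prod.ext_iff]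
        exact ⟨e1, Prod.ext_iff.mpr ⟨by dsimp only; omega, by dsimp only; omega⟩⟩
    · rintro ⟨h1, h2⟩
      obtain ⟨hb1, hb2, hb3, hb4⟩ := triangle_bounds (by omega) hsub h2
      refine ⟨h2, ?_⟩
      rw [ear_char hn hb1 hb2 hb3 hb4]
      rcases (mem_cands hn).1 h1 with ⟨v, hv1, hv2, rfl⟩ | rfl | rfl
      · exact Or.inl ⟨rfl, rfl⟩
      · exact Or.inr (Or.inl ⟨rfl, rfl, rfl⟩)
      · exact Or.inr (Or.inr ⟨rfl, rfl, rfl⟩)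
  rw [Finset.sum_congr rfl hear, Finset.sum_comm]
  have hcnt : ∀ t ∈ cands n, ∑ T ∈ triangulations 1 n,
      (if t ∈ triangles 1 n T then 1 else 0) = catalan (n - 3) := by
    intro t ht
    rw [← Finset.sum_filter, Finset.sum_const, smul_eq_mul, mul_one]
    rcases (mem_cands hn).1 ht with ⟨v, hv1, hv2, rfl⟩ | rfl | rfl
    · have hfc := Finset.filter_congr
        (fun T (hT : T ∈ triangulations 1 n) => cand_mem_iff_mid hn hv1 hv2 hT)
      rw [hfc, card_ear_mid hn hv1 hv2]
    · have hfc := Finset.filter_congr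
        (fun T (hT : T ∈ triangulations 1 n) => cand_mem_iff_left hn hT)
      rw [hfc, card_ear_left hn]
    · have hfc := Finset.filter_congr
        (fun T (hT : T ∈ triangulations 1 n) => cand_mem_iff_right hn hT)
      rw [hfc, card_ear_right hn]
  rw [Finset.sum_congr rfl hcnt, Finset.sum_const, smul_eq_mul, card_cands hn]
lemma catalan_id {n : ℕ} (hn : 4 ≤ n) :
    (n - 1) * catalan (n - 2) = 2 * (2 * n - 5) * catalan (n - 3) := by
  set m := n - 3 with hm
  have h1 : (m + 2) * catalan (m + 1) = Nat.centralBinom (m + 1) :=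
    succ_mul_catalan_eq_centralBinom (m + 1)
  have h2 := Nat.succ_mul_centralBinom_succ m
  have h3 := succ_mul_catalan_eq_centralBinom m
  have h4 : (m + 1) * ((m + 2) * catalan (m + 1)) =
      (m + 1) * (2 * (2 * m + 1) * catalan m) := by
    calc (m + 1) * ((m + 2) * catalan (m + 1))
        = (m + 1) * Nat.centralBinom (m + 1) := by rw [h1]
      _ = 2 * (2 * m + 1) * Nat.centralBinom m := h2
      _ = 2 * (2 * m + 1) * ((m + 1) * catalan m) := by rw [h3]
      _ = (m + 1) * (2 * (2 * m + 1) * catalan m) := by ring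
  have h5 := Nat.eq_of_mul_eq_mul_left (show 0 < m + 1 by omega) h4
  have e1 : n - 2 = m + 1 := by omega
  have e2 : n - 1 = m + 2 := by omega
  have e3 : 2 * n - 5 = 2 * m + 1 := by omega
  rw [e1, e2, e3]
  exact h5

/-- the expected number of triangles with exactly one side on `P_n`
is `n(n-4)/(2n-5)` (Lemma 2(II)). -/
theorem oneSide_expectation (n : ℕ) (hn : 4 ≤ n) :
    (2 * n - 5) * ∑ T ∈ triangulations 1 n, oneSideCount n T =
      n * (n - 4) * catalan (n - 2) := by
  have hcardtri : (triangulations 1 n).card = catalan (n - 2) := by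
    have h := card_triangulations_aux n 1 n (by omega) (by omega)
    have h2 : n - 1 - 1 = n - 2 := by omega
    rw [h2] at h
    exact h
  set S := ∑ T ∈ triangulations 1 n, oneSideCount n T with hS
  set E := ∑ T ∈ triangulations 1 n, earCount n T with hE
  have hsum : S + 2 * E = n * catalan (n - 2) := by
    rw [hS, hE, Finset.mul_sum, ← Finset.sum_add_distrib]
    rw [Finset.sum_congr rfl (fun T hT => oneSide_two_ear hn hT)]
    rw [Finset.sum_const, smul_eq_mul, hcardtri, mul_comm]
  have hear : E = n * catalan (n - 3) := sum_earCount hn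
  have hid := catalan_id hn
  have e1 : n * ((n - 1) * catalan (n - 2)) = (2 * n - 5) * (2 * E) := by
    rw [hid, hear]
    ring
  have e2 : (2 * n - 5) * S + (2 * n - 5) * (2 * E) = (2 * n - 5) * (n * catalan (n - 2)) := by
    rw [← Nat.mul_add, hsum]
  have e3 : (2 * n - 5) * (n * catalan (n - 2)) =
      n * (n - 4) * catalan (n - 2) + n * ((n - 1) * catalan (n - 2)) := by
    have h : 2 * n - 5 = (n - 4) + (n - 1) := by omega
    rw [h]
    ring
  have key : (2 * n - 5) * S + n * ((n - 1) * catalan (n - 2)) =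
      n * (n - 4) * catalan (n - 2) + n * ((n - 1) * catalan (n - 2)) := by
    calc (2 * n - 5) * S + n * ((n - 1) * catalan (n - 2))
        = (2 * n - 5) * S + (2 * n - 5) * (2 * E) := by rw [e1]
      _ = (2 * n - 5) * (n * catalan (n - 2)) := e2
      _ = n * (n - 4) * catalan (n - 2) + n * ((n - 1) * catalan (n - 2)) := e3
  exact Nat.add_right_cancel key
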